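/- Let a > 0 and suppose that for every R > 0 there exists a positive C² function v on [−R,R] satisfying v'' + (a/2)v ≤ 0 on [−R,R]. Derive a contradiction: equivalently, there exists R > 0 such that no positive C² function v on [−R,R] satisfies v'' + (a/2)v ≤ 0, namely any R with π²/(4R²) < a/2. -/

import Mathlib

open Real Set

/-- For `R` with `π²/(4R²) < a/2`, no positive `C²` function on `[-R, R]` can
satisfy `v'' + (a/2) v ≤ 0` there. -/
theorem stmt18 (a : ℝ) (ha : 0 < a) (R : ℝ) (hR : 0 < R)
    (hRa : π ^ 2 / (4 * R ^ 2) < a / 2) :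
    ¬ ∃ v : ℝ → ℝ, ContDiff ℝ 2 v ∧ (∀ x ∈ Icc (-R) R, 0 < v x)
      ∧ ∀ x ∈ Icc (-R) R, deriv (deriv v) x + (a / 2) * v x ≤ 0 := by
  rintro ⟨v, hv2, hvpos, hvineq⟩
  set c : ℝ := π / (2 * R) with hc_def
  have hc : 0 < c := div_pos Real.pi_pos (by linarith)
  have hcR : c * R = π / 2 := by
    rw [hc_def, div_mul_eq_mul_div, div_eq_div_iff (by positivity) (by norm_num)]; ring
  have hc2 : c ^ 2 = π ^ 2 / (4 * R ^ 2) := by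
    rw [hc_def]; field_simp; ring
  -- v is C², so deriv v is differentiable
  have hdv1 : ContDiff ℝ 1 (deriv v) := by
    have := (contDiff_succ_iff_deriv (n := 1)).mp (by exact_mod_cast hv2)
    exact this.2.2
  have hdv : Differentiable ℝ (deriv v) := hdv1.differentiable one_ne_zero
  have hv' : Differentiable ℝ v := hv2.differentiable (by norm_num)
  set W : ℝ → ℝ := fun x => Real.cos (c * x) * deriv v x + c * Real.sin (c * x) * v x
    with hW_def
  have hW : ∀ x : ℝ, HasDerivAt W
      (Real.cos (c * x) * (deriv (deriv v) x + c ^ 2 * v x)) x := by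
    intro x
    have hid : HasDerivAt (fun x : ℝ => c * x) c x := by
      simpa using (hasDerivAt_id x).const_mul c
    have hcos : HasDerivAt (fun x => Real.cos (c * x)) (-Real.sin (c * x) * c) x :=
      hid.cos
    have hsin : HasDerivAt (fun x => Real.sin (c * x)) (Real.cos (c * x) * c) x :=
      hid.sin
    have hdvx : HasDerivAt (deriv v) (deriv (deriv v) x) x :=
      (hdv x).hasDerivAt
    have hvx : HasDerivAt v (deriv v x) x := (hv' x).hasDerivAt
    have := (hcos.mul hdvx).add (((hsin.const_mul c)).mul hvx)
    exact this.congr_deriv (by ring)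
  have hW_anti : AntitoneOn W (Icc (-R) R) := by
    apply antitoneOn_of_deriv_nonpos (convex_Icc _ _)
    · exact fun x _ => (hW x).differentiableAt.continuousAt.continuousWithinAt
    · exact fun x _ => (hW x).differentiableAt.differentiableWithinAt
    · intro x hx
      rw [interior_Icc] at hx
      rw [(hW x).deriv]
      have hxm : x ∈ Icc (-R) R := Ioo_subset_Icc_self hx
      have hcos_nn : 0 ≤ Real.cos (c * x) := by
        apply Real.cos_nonneg_of_mem_Icc
        constructor
        · nlinarith [hx.1, hx.2, hcR, hc]
        · nlinarith [hx.1, hx.2, hcR, hc]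
      have h1 : deriv (deriv v) x + c ^ 2 * v x ≤ 0 := by
        have := hvineq x hxm
        have hvp := hvpos x hxm
        nlinarith [hc2, hRa]
      exact mul_nonpos_of_nonneg_of_nonpos hcos_nn h1
  have hmem1 : (-R) ∈ Icc (-R) R := by constructor <;> linarith
  have hmem2 : R ∈ Icc (-R) R := by constructor <;> linarith
  have hle : W R ≤ W (-R) := hW_anti hmem1 hmem2 (by linarith)
  have hWneg : W (-R) = -c * v (-R) := by
    rw [hW_def]
    simp only
    have : c * (-R) = -(π / 2) := by rw [mul_neg, hcR]
    rw [this, Real.cos_neg, Real.sin_neg, Real.cos_pi_div_two, Real.sin_pi_div_two]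
    ring
  have hWpos : W R = c * v R := by
    rw [hW_def]
    simp only
    rw [hcR, Real.cos_pi_div_two, Real.sin_pi_div_two]
    ring
  have h1 := hvpos (-R) hmem1
  have h2 := hvpos R hmem2
  rw [hWneg, hWpos] at hle
  nlinarith
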